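/- Let G be a locally finite graph and x, y adjacent vertices. Then κ(x,y) ≤ #(x,y)/(d_x ∨ d_y), where #(x,y) is the number of common neighbors of x and y. -/

import Mathlib

open scoped Classical
noncomputable section

namespace OR

variable {V : Type*}

/-- The degree of a vertex. -/
def deg (G : SimpleGraph V) (x : V) : ℕ := Nat.card (G.neighborSet x)

/-- The simple random walk measure at a vertex. -/
def rw (G : SimpleGraph V) (x : V) : V → ℝ :=
  fun v => if G.Adj x v then ((deg G x : ℝ))⁻¹ else 0

/-- A coupling between two measures on the vertex set. -/
def IsCoupling (μ ν : V → ℝ) (A : V → V → ℝ) : Prop :=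
  (∀ u v, 0 ≤ A u v) ∧
  (Function.support fun p : V × V => A p.1 p.2).Finite ∧
  (∀ u, ∑ᶠ v, A u v = μ u) ∧ (∀ v, ∑ᶠ u, A u v = ν v)

/-- The 1-Wasserstein distance w.r.t. the graph distance. -/
def W (G : SimpleGraph V) (μ ν : V → ℝ) : ℝ :=
  sInf { r | ∃ A, IsCoupling μ ν A ∧ r = ∑ᶠ u, ∑ᶠ v, A u v * (G.dist u v : ℝ) }

/-- The Ollivier–Ricci curvature. -/
def ricci (G : SimpleGraph V) (x y : V) : ℝ :=
  1 - W G (rw G x) (rw G y) / (G.dist x y : ℝ)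

/-- The number of common neighbours of `x` and `y`. -/
def tri (G : SimpleGraph V) (x y : V) : ℕ := Nat.card {w | G.Adj x w ∧ G.Adj y w}


end OR

section aux

open OR Function

variable {V : Type*} {G : SimpleGraph V}

lemma deg_eq_card (hx : (G.neighborSet x).Finite) :
    deg G x = hx.toFinset.card := by
  rw [deg, Nat.card_coe_set_eq, Set.ncard_eq_toFinset_card _ hx]

lemma deg_pos (hx : (G.neighborSet x).Finite) {y : V} (hxy : G.Adj x y) :
    0 < deg G x := by
  rw [deg, Nat.card_coe_set_eq]
  exact (Set.ncard_pos hx).2 ⟨y, hxy⟩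

lemma rw_nonneg (G : SimpleGraph V) (x v : V) : 0 ≤ rw G x v := by
  unfold rw; split <;> positivity

lemma rw_support_subset (G : SimpleGraph V) (x : V) :
    support (rw G x) ⊆ G.neighborSet x := by
  intro v hv
  by_contra h
  exact hv (if_neg h)

lemma rw_sum (hx : (G.neighborSet x).Finite) {y : V} (hxy : G.Adj x y) :
    ∑ v ∈ hx.toFinset, rw G x v = 1 := by
  have hd : (0 : ℝ) < (deg G x : ℝ) := by exact_mod_cast deg_pos hx hxy
  have : ∀ v ∈ hx.toFinset, rw G x v = ((deg G x : ℝ))⁻¹ := by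
    intro v hv
    rw [Set.Finite.mem_toFinset] at hv
    exact if_pos hv
  rw [Finset.sum_congr rfl this, Finset.sum_const, ← deg_eq_card hx, nsmul_eq_mul,
    mul_inv_cancel₀ hd.ne']

lemma rw_finsum (hx : (G.neighborSet x).Finite) {y : V} (hxy : G.Adj x y) :
    ∑ᶠ v, rw G x v = 1 := by
  rw [finsum_eq_sum_of_support_subset _ (s := hx.toFinset)
    (by simpa using rw_support_subset G x), rw_sum hx hxy]

end aux

open OR Function

theorem jost_liu_upper_bound {V : Type*} (G : SimpleGraph V)
    (hlf : ∀ v : V, (G.neighborSet v).Finite) (x y : V) (hxy : G.Adj x y) :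
    OR.ricci G x y ≤ (OR.tri G x y : ℝ) / (max (OR.deg G x : ℝ) (OR.deg G y : ℝ)) := by
  classical
  set s : Finset V := (hlf x).toFinset with hs
  set t : Finset V := (hlf y).toFinset with ht
  have hdx : (0 : ℝ) < (deg G x : ℝ) := by exact_mod_cast deg_pos (hlf x) hxy
  have hdy : (0 : ℝ) < (deg G y : ℝ) := by exact_mod_cast deg_pos (hlf y) hxy.symm
  have hmax : (0 : ℝ) < max (deg G x : ℝ) (deg G y : ℝ) := lt_max_of_lt_left hdx
  -- the goal value
  set c : ℝ := (tri G x y : ℝ) / max (deg G x : ℝ) (deg G y : ℝ) with hc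
  -- the set of coupling costs
  set S : Set ℝ := { r | ∃ A, IsCoupling (rw G x) (rw G y) A ∧
      r = ∑ᶠ u, ∑ᶠ v, A u v * (G.dist u v : ℝ) } with hS
  -- S is nonempty via the product coupling
  have hne : S.Nonempty := by
    refine ⟨_, fun u v => rw G x u * rw G y v, ?_, rfl⟩
    refine ⟨fun u v => mul_nonneg (rw_nonneg G x u) (rw_nonneg G y v), ?_, ?_, ?_⟩
    · apply Set.Finite.subset ((hlf x).prod (hlf y))
      rintro ⟨u, v⟩ hp
      simp only [mem_support] at hp
      exact ⟨rw_support_subset G x (left_ne_zero_of_mul hp),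
        rw_support_subset G y (right_ne_zero_of_mul hp)⟩
    · intro u
      show (∑ᶠ v, rw G x u * rw G y v) = rw G x u
      rw [← mul_finsum _ _,
        rw_finsum (hlf y) hxy.symm, mul_one]
    · intro v
      show (∑ᶠ u, rw G x u * rw G y v) = rw G y v
      rw [← finsum_mul _ _,
        rw_finsum (hlf x) hxy, one_mul]
  -- every element of S is at least 1 - c
  have hlb : ∀ r ∈ S, 1 - c ≤ r := by
    rintro r ⟨A, ⟨hA0, hAfin, hA1, hA2⟩, rfl⟩
    -- A u v ≤ rw G x u and ≤ rw G y v
    have hrowfin : ∀ u, (support fun v => A u v).Finite := by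
      intro u
      apply Set.Finite.subset (hAfin.image Prod.snd)
      intro v hv
      exact ⟨(u, v), hv, rfl⟩
    have hcolfin : ∀ v, (support fun u => A u v).Finite := by
      intro v
      apply Set.Finite.subset (hAfin.image Prod.fst)
      intro u hu
      exact ⟨(u, v), hu, rfl⟩
    have hAx : ∀ u v, A u v ≤ rw G x u := by
      intro u v
      rw [← hA1 u]
      exact single_le_finsum v (hrowfin u) (fun j => hA0 u j)
    have hAy : ∀ u v, A u v ≤ rw G y v := by
      intro u v
      rw [← hA2 v]
      exact single_le_finsum u (hcolfin v) (fun j => hA0 j v)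
    have hAs : ∀ u v, A u v ≠ 0 → u ∈ s := by
      intro u v h
      have := lt_of_le_of_ne (hA0 u v) (Ne.symm h)
      have hu : rw G x u ≠ 0 := by
        intro h0
        exact absurd ((hAx u v).trans_eq h0) (not_le.2 this)
      simpa [hs] using rw_support_subset G x hu
    have hAt : ∀ u v, A u v ≠ 0 → v ∈ t := by
      intro u v h
      have := lt_of_le_of_ne (hA0 u v) (Ne.symm h)
      have hv : rw G y v ≠ 0 := by
        intro h0
        exact absurd ((hAy u v).trans_eq h0) (not_le.2 this)
      simpa [ht] using rw_support_subset G y hv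
    -- rewrite the double finsum as a double finset sum over s × t
    have hrw : (∑ᶠ u, ∑ᶠ v, A u v * (G.dist u v : ℝ)) =
        ∑ u ∈ s, ∑ v ∈ t, A u v * (G.dist u v : ℝ) := by
      have hinner : ∀ u, (∑ᶠ v, A u v * (G.dist u v : ℝ)) =
          ∑ v ∈ t, A u v * (G.dist u v : ℝ) := by
        intro u
        refine finsum_eq_sum_of_support_subset _ ?_
        intro v hv
        simp only [mem_support] at hv
        exact hAt u v (left_ne_zero_of_mul hv)
      rw [finsum_congr hinner]
      refine finsum_eq_sum_of_support_subset _ ?_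
      intro u hu
      simp only [mem_support] at hu
      obtain ⟨v, hv, h⟩ := Finset.exists_ne_zero_of_sum_ne_zero hu
      exact hAs u v (left_ne_zero_of_mul h)
    rw [hrw]
    -- total mass is 1
    have htotal : ∑ u ∈ s, ∑ v ∈ t, A u v = 1 := by
      have hrow : ∀ u ∈ s, ∑ v ∈ t, A u v = rw G x u := by
        intro u _
        rw [← hA1 u]
        exact (finsum_eq_sum_of_support_subset _ (fun v hv => hAt u v hv)).symm
      rw [Finset.sum_congr rfl hrow]
      exact rw_sum (hlf x) hxy
    -- diagonal bound
    have hdiag : ∑ u ∈ s, ∑ v ∈ t, (if u = v then A u v else 0) ≤ c := by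
      have h1 : ∑ u ∈ s, ∑ v ∈ t, (if u = v then A u v else 0) =
          ∑ u ∈ s ∩ t, A u u := by
        have : ∀ u ∈ s, (∑ v ∈ t, if u = v then A u v else 0) =
            if u ∈ t then A u u else 0 := by
          intro u _
          simp [Finset.sum_ite_eq t u (fun v => A u v)]
        rw [Finset.sum_congr rfl this, Finset.sum_ite_mem]
      rw [h1]
      have h2 : ∀ u ∈ s ∩ t, A u u ≤ (max (deg G x : ℝ) (deg G y : ℝ))⁻¹ := by
        intro u hu
        rw [Finset.mem_inter, hs, ht, Set.Finite.mem_toFinset, Set.Finite.mem_toFinset] at hu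
        have h4 : rw G x u = ((deg G x : ℝ))⁻¹ := if_pos hu.1
        have h5 : rw G y u = ((deg G y : ℝ))⁻¹ := if_pos hu.2
        rcases max_cases (deg G x : ℝ) (deg G y : ℝ) with ⟨hm, _⟩ | ⟨hm, _⟩
        · rw [hm, ← h4]; exact hAx u u
        · rw [hm, ← h5]; exact hAy u u
      calc ∑ u ∈ s ∩ t, A u u ≤ ∑ _u ∈ s ∩ t, (max (deg G x : ℝ) (deg G y : ℝ))⁻¹ :=
            Finset.sum_le_sum h2
        _ = (s ∩ t).card * (max (deg G x : ℝ) (deg G y : ℝ))⁻¹ := by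
            rw [Finset.sum_const, nsmul_eq_mul]
        _ = c := by
            have hfin : ({w | G.Adj x w ∧ G.Adj y w} : Set V).Finite :=
              (hlf x).subset (fun w hw => hw.1)
            have hcard : (s ∩ t).card = tri G x y := by
              rw [tri, Nat.card_coe_set_eq, Set.ncard_eq_toFinset_card _ hfin]
              congr 1
              ext w
              simp [hs, ht, hfin.mem_toFinset, SimpleGraph.mem_neighborSet]
            rw [hc, div_eq_mul_inv, ← hcard]
    -- pointwise bound
    have hpt : ∀ u ∈ s, ∀ v ∈ t,
        A u v - (if u = v then A u v else 0) ≤ A u v * (G.dist u v : ℝ) := by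
      intro u hu v hv
      by_cases huv : u = v
      · simp only [if_pos huv, sub_self]
        exact mul_nonneg (hA0 u v) (Nat.cast_nonneg _)
      · simp only [if_neg huv, sub_zero]
        rw [hs, Set.Finite.mem_toFinset] at hu
        rw [ht, Set.Finite.mem_toFinset] at hv
        have hreach : G.Reachable u v :=
          ((((G.adj_symm hu).reachable).trans hxy.reachable).trans hv.reachable)
        have hd1 : 1 ≤ G.dist u v := hreach.pos_dist_of_ne huv
        have : (1 : ℝ) ≤ (G.dist u v : ℝ) := by exact_mod_cast hd1
        nlinarith [hA0 u v]
    calc 1 - c ≤ (∑ u ∈ s, ∑ v ∈ t, A u v) -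
          ∑ u ∈ s, ∑ v ∈ t, (if u = v then A u v else 0) := by
          rw [htotal]; linarith
      _ = ∑ u ∈ s, ∑ v ∈ t, (A u v - (if u = v then A u v else 0)) := by
          simp only [Finset.sum_sub_distrib]
      _ ≤ ∑ u ∈ s, ∑ v ∈ t, A u v * (G.dist u v : ℝ) := by
          refine Finset.sum_le_sum fun u hu => Finset.sum_le_sum fun v hv => hpt u hu v hv
  -- conclude
  have hW : 1 - c ≤ W G (rw G x) (rw G y) := le_csInf hne hlb
  have hd1 : G.dist x y = 1 := SimpleGraph.dist_eq_one_iff_adj.2 hxy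
  rw [ricci, hd1]
  push_cast
  rw [div_one]
  linarith
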